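/- Let S be a 2×2 real matrix with 0 < det S < 1 and let G be a 2×2 real symmetric positive semidefinite matrix with det G = (1 − det S)². Then, writing s = det S, there exist 2×2 symplectic matrices T₁, T₂ (i.e. T_k J T_kᵀ = J) such that S = √s · T₂ T₁ and G = (1 − s) · T₂ T₂ᵀ. Hence the minimal noise TGCP map V ↦ S V Sᵀ + G decomposes as the symplectic map T₁, followed by the attenuation of transmissivity √s (V ↦ s·V + (1−s)·I), followed by the symplectic map T₂. -/

import Mathlib

open Matrix

noncomputable section

def J2 : Matrix (Fin 2) (Fin 2) ℝ := !![0, 1; -1, 0]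

lemma symplectic_of_det_one (A : Matrix (Fin 2) (Fin 2) ℝ) :
    A * J2 * Aᵀ = A.det • J2 := by
  ext i j
  fin_cases i <;> fin_cases j <;>
    simp [J2, Matrix.mul_apply, Fin.sum_univ_two, Matrix.det_fin_two] <;> ring

/-- decomposition of a minimal-noise TGCP map into
symplectic ∘ attenuation ∘ symplectic. -/
theorem minimal_noise_TGCP_decomposition (S G : Matrix (Fin 2) (Fin 2) ℝ)
    (hs0 : 0 < S.det) (hs1 : S.det < 1)
    (hG : G.PosSemidef) (hdetG : G.det = (1 - S.det)^2) :
    ∃ T₁ T₂ : Matrix (Fin 2) (Fin 2) ℝ,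
      T₁ * J2 * T₁ᵀ = J2 ∧ T₂ * J2 * T₂ᵀ = J2 ∧
      S = Real.sqrt S.det • (T₂ * T₁) ∧
      G = (1 - S.det) • (T₂ * T₂ᵀ) ∧
      ∀ V : Matrix (Fin 2) (Fin 2) ℝ,
        S * V * Sᵀ + G =
          T₂ * (S.det • (T₁ * V * T₁ᵀ) + (1 - S.det) • (1 : Matrix (Fin 2) (Fin 2) ℝ)) * T₂ᵀ := by
  set s := S.det with hs
  set t := 1 - s with ht
  have ht0 : 0 < t := by simp [ht]; linarith
  set a := G 0 0 with hA
  set b := G 0 1 with hB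
  set c := G 1 1 with hC
  -- symmetry
  have hsym : G 1 0 = b := by
    have := hG.1
    have h := congrFun (congrFun this 0) 1
    rw [hB]
    simpa [Matrix.conjTranspose_apply] using h
  -- diagonal entries nonneg
  have ha : 0 ≤ a := by
    have h := hG.dotProduct_mulVec_nonneg (Pi.single 0 1)
    simpa [dotProduct, Matrix.mulVec, Fin.sum_univ_two, Pi.single_apply] using h
  have hc : 0 ≤ c := by
    have h := hG.dotProduct_mulVec_nonneg (Pi.single 1 1)
    simpa [dotProduct, Matrix.mulVec, Fin.sum_univ_two, Pi.single_apply] using h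
  have hdet : a * c - b * b = t ^ 2 := by
    have := hdetG
    rw [Matrix.det_fin_two] at this
    rw [hsym] at this
    linarith [this]
  set k := t * (a + c + 2 * t) with hk
  have hk0 : 0 < k := by
    apply mul_pos ht0; linarith
  have hsqrtk : Real.sqrt k * Real.sqrt k = k := Real.mul_self_sqrt hk0.le
  have hsk0 : Real.sqrt k ≠ 0 := by positivity
  set T₂ : Matrix (Fin 2) (Fin 2) ℝ := (Real.sqrt k)⁻¹ • (G + t • (1 : Matrix (Fin 2) (Fin 2) ℝ)) with hT2
  -- key computation : T₂ * T₂ᵀ = t⁻¹ • G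
  have hGsq : (G + t • (1 : Matrix (Fin 2) (Fin 2) ℝ)) * (G + t • 1)ᵀ
      = (a + c + 2 * t) • G := by
    ext i j
    fin_cases i <;> fin_cases j <;>
      simp [Matrix.mul_apply, Fin.sum_univ_two, Matrix.transpose_apply,
        Matrix.one_apply, hsym, ← hA, ← hB, ← hC] <;> nlinarith [hdet]
  have hT2T2 : T₂ * T₂ᵀ = t⁻¹ • G := by
    rw [hT2, Matrix.transpose_smul, Matrix.smul_mul, Matrix.mul_smul, hGsq,
      smul_smul, smul_smul]
    congr 1
    have hx : a + c + 2 * t ≠ 0 := by linarith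
    rw [← mul_inv, hsqrtk, hk, mul_inv]
    field_simp
  have hGT2 : G = t • (T₂ * T₂ᵀ) := by
    rw [hT2T2, smul_smul, mul_inv_cancel₀ ht0.ne', one_smul]
  have hdetT2 : T₂.det = 1 := by
    have hdGt : (G + t • (1 : Matrix (Fin 2) (Fin 2) ℝ)).det = k := by
      rw [Matrix.det_fin_two]
      simp only [Matrix.add_apply, Matrix.smul_apply, Matrix.one_apply, hsym, ← hA, ← hB, ← hC]
      norm_num
      rw [hk]
      linear_combination hdet
    rw [hT2, Matrix.det_smul, hdGt]
    simp only [Fintype.card_fin]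
    rw [pow_two, ← mul_inv, hsqrtk]
    field_simp
  have hunit : IsUnit T₂.det := by rw [hdetT2]; exact isUnit_one
  have hs' : Real.sqrt s * Real.sqrt s = s := Real.mul_self_sqrt hs0.le
  have hss0 : Real.sqrt s ≠ 0 := by positivity
  set T₁ : Matrix (Fin 2) (Fin 2) ℝ := (Real.sqrt s)⁻¹ • (T₂⁻¹ * S) with hT1
  have hT2inv : T₂ * T₂⁻¹ = 1 := Matrix.mul_nonsing_inv _ hunit
  have hST : S = Real.sqrt s • (T₂ * T₁) := by
    rw [hT1, Matrix.mul_smul, smul_smul, mul_inv_cancel₀ hss0, one_smul,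
      ← Matrix.mul_assoc, hT2inv, Matrix.one_mul]
  have hdetT1 : T₁.det = 1 := by
    have hdetinv : (T₂⁻¹).det = 1 := by
      rw [Matrix.det_nonsing_inv, hdetT2]; simp
    rw [hT1, Matrix.det_smul, Fintype.card_fin, Matrix.det_mul, hdetinv, one_mul, ← hs,
      pow_two, ← mul_inv, hs']
    field_simp
  refine ⟨T₁, T₂, ?_, ?_, hST, hGT2, ?_⟩
  · rw [symplectic_of_det_one, hdetT1, one_smul]
  · rw [symplectic_of_det_one, hdetT2, one_smul]
  · intro V
    rw [hST, hGT2]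
    rw [Matrix.mul_add, Matrix.add_mul]
    congr 1
    · simp only [Matrix.transpose_smul, Matrix.smul_mul, Matrix.mul_smul, smul_smul,
        Matrix.transpose_mul, Matrix.mul_assoc]
      rw [hs']
    · simp only [Matrix.mul_smul, Matrix.smul_mul, Matrix.mul_one]
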